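/- Let n ≥ 2. If 2n + 1 and 2n + 3 are both prime (twin primes), then the prime sum graph G_{2n} contains a Hamilton cycle; moreover this Hamilton cycle can be chosen so that the sum of every pair of adjacent vertices on the cycle lies in the set {3, 2n+1, 2n+3}. -/

import Mathlib

/-- The prime sum graph of order `m`: vertices are `{1, ..., m}`, and two distinct
vertices are adjacent iff their sum is prime. -/
def primeSumGraph (m : ℕ) : SimpleGraph (Finset.Icc 1 m) where
  Adj i j := i ≠ j ∧ Nat.Prime (i.1 + j.1)
  symm := by
    constructor
    rintro i j ⟨h1, h2⟩
    exact ⟨h1.symm, by rwa [Nat.add_comm]⟩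
  loopless := by constructor; rintro i ⟨h, _⟩; exact h rfl

namespace PSAux

variable {V : Type*} {G : SimpleGraph V}

/-- Build a walk along `f s, f (s+1), ..., f (s+m)`. -/
def mkW (f : ℕ → V) (hf : ∀ i, G.Adj (f i) (f (i + 1))) : ∀ s m : ℕ, G.Walk (f s) (f (s + m))
  | _, 0 => SimpleGraph.Walk.nil
  | s, m + 1 =>
    (SimpleGraph.Walk.cons (hf s) (mkW f hf (s + 1) m)).copy rfl (congrArg f (by omega))

lemma mkW_support (f : ℕ → V) (hf : ∀ i, G.Adj (f i) (f (i + 1))) (s m : ℕ) :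
    (mkW f hf s m).support = (List.range' s (m + 1)).map f := by
  induction m generalizing s with
  | zero => simp [mkW]
  | succ m ih =>
    rw [mkW, SimpleGraph.Walk.support_copy, SimpleGraph.Walk.support_cons, ih,
      List.range'_succ]
    simp [List.range'_succ]

lemma mkW_edges (f : ℕ → V) (hf : ∀ i, G.Adj (f i) (f (i + 1))) (s m : ℕ) :
    ∀ e ∈ (mkW f hf s m).edges, ∃ i, s ≤ i ∧ i < s + m ∧ e = s(f i, f (i + 1)) := by
  induction m generalizing s with
  | zero => simp [mkW]
  | succ m ih =>
    intro e he
    rw [mkW, SimpleGraph.Walk.edges_copy, SimpleGraph.Walk.edges_cons] at he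
    rcases List.mem_cons.mp he with h | h
    · exact ⟨s, le_refl s, by omega, h⟩
    · obtain ⟨i, hi1, hi2, hi3⟩ := ih (s + 1) e h
      exact ⟨i, by omega, by omega, hi3⟩

/-- The sequence of vertices of the Hamilton cycle: `1, 2n, 3, 2n-2, 5, ..., 2n-1, 2`. -/
def pv (n i : ℕ) : ℕ := if i % 2 = 0 then i + 1 else 2 * n - i + 1

lemma pv_mem (n : ℕ) (hn : 1 ≤ n) (i : ℕ) : pv n (i % (2 * n)) ∈ Finset.Icc 1 (2 * n) := by
  have h : i % (2 * n) < 2 * n := Nat.mod_lt _ (by omega)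
  simp only [pv, Finset.mem_Icc]
  split_ifs <;> omega

/-- The vertex sequence as elements of the subtype, periodic with period `2n`. -/
def vv (n : ℕ) (hn : 1 ≤ n) (i : ℕ) : (Finset.Icc 1 (2 * n) : Finset ℕ) :=
  ⟨pv n (i % (2 * n)), pv_mem n hn i⟩

lemma pv_inj (n : ℕ) {i j : ℕ} (hi : i < 2 * n) (hj : j < 2 * n) (h : pv n i = pv n j) :
    i = j := by
  simp only [pv] at h
  split_ifs at h <;> omega

lemma vv_inj (n : ℕ) (hn : 1 ≤ n) {i j : ℕ} (hi : i ≤ 2 * n) (hj : j ≤ 2 * n)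
    (h : vv n hn i = vv n hn j) :
    i = j ∨ (i = 0 ∧ j = 2 * n) ∨ (i = 2 * n ∧ j = 0) := by
  have h2 : (0 : ℕ) < 2 * n := by omega
  have hh : pv n (i % (2 * n)) = pv n (j % (2 * n)) := congrArg Subtype.val h
  have := pv_inj n (Nat.mod_lt _ h2) (Nat.mod_lt _ h2) hh
  have hi' : i % (2 * n) = if i = 2 * n then 0 else i := by
    split_ifs with h'
    · simp [h']
    · exact Nat.mod_eq_of_lt (by omega)
  have hj' : j % (2 * n) = if j = 2 * n then 0 else j := by
    split_ifs with h'
    · simp [h']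
    · exact Nat.mod_eq_of_lt (by omega)
  split_ifs at hi' hj' <;> omega

lemma vv_sum (n : ℕ) (hn : 2 ≤ n) (hn1 : 1 ≤ n) (i : ℕ) :
    (vv n hn1 i).1 + (vv n hn1 (i + 1)).1 = 3 ∨
    (vv n hn1 i).1 + (vv n hn1 (i + 1)).1 = 2 * n + 1 ∨
    (vv n hn1 i).1 + (vv n hn1 (i + 1)).1 = 2 * n + 3 := by
  have h2 : (0 : ℕ) < 2 * n := by omega
  have hj : i % (2 * n) < 2 * n := Nat.mod_lt _ h2
  have hstep : (i + 1) % (2 * n) = (i % (2 * n) + 1) % (2 * n) := by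
    conv_lhs => rw [Nat.add_mod]
    rw [Nat.mod_eq_of_lt (show (1 : ℕ) < 2 * n by omega)]
  by_cases hlast : i % (2 * n) = 2 * n - 1
  · have h1 : (i + 1) % (2 * n) = 0 := by
      rw [hstep, hlast, show 2 * n - 1 + 1 = 2 * n by omega, Nat.mod_self]
    simp only [vv, hlast, h1, pv]
    split_ifs <;> omega
  · have h1 : (i + 1) % (2 * n) = i % (2 * n) + 1 := by
      rw [hstep]; exact Nat.mod_eq_of_lt (by omega)
    simp only [vv, h1, pv]
    split_ifs <;> omega

end PSAux

/-- If `2n + 1` and `2n + 3` are twin primes, then `G_{2n}` has a Hamilton cycle,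
and moreover one in which every pair of adjacent vertices sums to an element of
`{3, 2n+1, 2n+3}`. -/
theorem primeSumGraph_hamiltonian_of_twin_primes (n : ℕ) (hn : 2 ≤ n)
    (h1 : Nat.Prime (2 * n + 1)) (h3 : Nat.Prime (2 * n + 3)) :
    ∃ a, ∃ w : (primeSumGraph (2 * n)).Walk a a, w.IsHamiltonianCycle ∧
      ∀ u v : Finset.Icc 1 (2 * n), s(u, v) ∈ w.edges →
        u.1 + v.1 ∈ ({3, 2 * n + 1, 2 * n + 3} : Set ℕ) := by
  classical
  have hn1 : 1 ≤ n := by omega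
  set f : ℕ → (Finset.Icc 1 (2 * n) : Finset ℕ) := PSAux.vv n hn1 with hf_def
  -- adjacency along the sequence
  have hsum : ∀ i, (f i).1 + (f (i + 1)).1 = 3 ∨ (f i).1 + (f (i + 1)).1 = 2 * n + 1 ∨
      (f i).1 + (f (i + 1)).1 = 2 * n + 3 := fun i => PSAux.vv_sum n hn hn1 i
  have hadj : ∀ i, (primeSumGraph (2 * n)).Adj (f i) (f (i + 1)) := by
    intro i
    have hs := hsum i
    constructor
    · intro h
      have h' : (f i).1 = (f (i + 1)).1 := congrArg Subtype.val h
      have h1' : 1 ≤ (f (i + 1)).1 := (Finset.mem_Icc.mp (f (i + 1)).2).1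
      omega
    · rcases hs with h | h | h <;> rw [h]
      · exact Nat.prime_three
      · exact h1
      · exact h3
  -- the inner path from f 1 to f (2n)
  have key : (1 : ℕ) + (2 * n - 1) = 2 * n := by omega
  have hper : f (1 + (2 * n - 1)) = f 0 := by
    rw [key]
    apply Subtype.ext
    simp [hf_def, PSAux.vv, Nat.mod_self]
  let p : (primeSumGraph (2 * n)).Walk (f 1) (f 0) :=
    (PSAux.mkW f hadj 1 (2 * n - 1)).copy rfl hper
  -- support of p
  have hpsupp : p.support = (List.range' 1 (2 * n)).map f := by
    show ((PSAux.mkW f hadj 1 (2 * n - 1)).copy rfl hper).support = _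
    rw [SimpleGraph.Walk.support_copy, PSAux.mkW_support,
      show 2 * n - 1 + 1 = 2 * n from by omega]
  -- p's support is nodup
  have hnodup : p.support.Nodup := by
    rw [hpsupp]
    refine List.Nodup.map_on ?_ (List.nodup_range' _ (h := Nat.one_pos))
    intro x hx y hy hxy
    simp only [List.mem_range'_1] at hx hy
    rcases PSAux.vv_inj n hn1 (by omega) (by omega) hxy with h | h | h <;> omega
  -- edges of p
  have hpedges : ∀ e ∈ p.edges, ∃ i, 1 ≤ i ∧ i < 2 * n ∧ e = s(f i, f (i + 1)) := by
    intro e he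
    have : e ∈ (PSAux.mkW f hadj 1 (2 * n - 1)).edges := by
      rwa [show p.edges = (PSAux.mkW f hadj 1 (2 * n - 1)).edges from
        SimpleGraph.Walk.edges_copy _ rfl hper] at he
    obtain ⟨i, hi1, hi2, hi3⟩ := PSAux.mkW_edges f hadj 1 (2 * n - 1) e this
    exact ⟨i, hi1, by omega, hi3⟩
  -- the edge s(f 0, f 1) is not in p
  have hstart : s(f 0, f 1) ∉ p.edges := by
    intro h
    obtain ⟨i, hi1, hi2, hi3⟩ := hpedges _ h
    rcases Sym2.eq_iff.mp hi3 with ⟨ha, hb⟩ | ⟨ha, hb⟩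
    · rcases PSAux.vv_inj n hn1 (by omega) (by omega) ha with h' | h' | h' <;> omega
    · -- f 0 = f (i+1), f 1 = f i
      rcases PSAux.vv_inj n hn1 (by omega) (by omega) ha with h' | h' | h'
      · omega
      · -- i + 1 = 2 * n, then f 1 = f (2n - 1)
        rcases PSAux.vv_inj n hn1 (by omega) (by omega) hb with h'' | h'' | h'' <;> omega
      · omega
  -- the full cycle
  let w : (primeSumGraph (2 * n)).Walk (f 0) (f 0) := SimpleGraph.Walk.cons (hadj 0) p
  refine ⟨f 0, w, ?_, ?_⟩
  · rw [SimpleGraph.Walk.isHamiltonianCycle_iff_isCycle_and_support_count_tail_eq_one]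
    constructor
    · exact (SimpleGraph.Walk.cons_isCycle_iff p (hadj 0)).mpr
        ⟨SimpleGraph.Walk.IsPath.mk' hnodup, hstart⟩
    · intro a
      have htail : w.support.tail = (List.range' 1 (2 * n)).map f := by
        rw [show w.support = f 0 :: p.support from SimpleGraph.Walk.support_cons _ _, List.tail_cons,
          hpsupp]
      rw [htail]
      convert List.count_eq_one_of_mem (a := a) (l := (List.range' 1 (2 * n)).map f) ?_ ?_
      · rw [← hpsupp]; exact hnodup
      · -- every vertex is in the list, by cardinality
        have hlen : ((List.range' 1 (2 * n)).map f).length = 2 * n := by simp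
        have hnd : ((List.range' 1 (2 * n)).map f).Nodup := by rw [← hpsupp]; exact hnodup
        have hcard : Fintype.card (Finset.Icc 1 (2 * n) : Finset ℕ) = 2 * n := by
          rw [Fintype.card_coe, Nat.card_Icc]; omega
        have : ((List.range' 1 (2 * n)).map f).toFinset = Finset.univ := by
          apply Finset.eq_univ_of_card
          rw [List.toFinset_card_of_nodup hnd, hlen, hcard]
        have := Finset.eq_univ_iff_forall.mp this a
        rwa [List.mem_toFinset] at this
  · intro u v huv
    have : ∃ i, s(u, v) = s(f i, f (i + 1)) := by
      rcases List.mem_cons.mp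
        (by rwa [show w.edges = s(f 0, f 1) :: p.edges from SimpleGraph.Walk.edges_cons _ _] at huv)
        with h | h
      · exact ⟨0, h⟩
      · obtain ⟨i, _, _, hi3⟩ := hpedges _ h
        exact ⟨i, hi3⟩
    obtain ⟨i, hi⟩ := this
    have hs := hsum i
    simp only [Set.mem_insert_iff, Set.mem_singleton_iff]
    rcases Sym2.eq_iff.mp hi with ⟨ha, hb⟩ | ⟨ha, hb⟩ <;> rw [ha, hb] <;> omega
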